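/- Let p ∈ (1,2) and a > 0, let f = f(·,a) be the unique solution of (|f'|^{p-2} f')' + f - |f'|^{p-1} = 0 on (0,∞) with f(0) = a, f'(0) = 0, and let ψ = ψ(·,a) be defined on [0,1) by ψ(1-f(r)/a) = |f'(r)|^p/a^p. Assume that ψ(y)(1-y)^{-p} → (p-1)^{-p} as y → 1 (so that R(a) := inf{r > 0 : f(r) = 0} = ∞). Then the integral I := ∫_0^∞ e^σ f(σ) dσ is finite, e^r |f'(r)|^{p-1} → I as r → ∞, and f(r) ∼ (p-1) I^{1/(p-1)} e^{-r/(p-1)} as r → ∞, i.e. e^{r/(p-1)} f(r) → (p-1) I^{1/(p-1)} > 0. -/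

import Mathlib

open Set Filter Topology MeasureTheory

/-- The extinction "radius" `R = inf{r > 0 : f(r) = 0}`, as an extended real number
(`⊤` when `f` does not vanish on `(0,∞)`). -/
noncomputable def extTime (f : ℝ → ℝ) : EReal :=
  sInf {x : EReal | ∃ r : ℝ, 0 < r ∧ f r = 0 ∧ x = (r : EReal)}

/-- `f` solves `(|f'|^{p-2} f')' + f - |f'|^{p-1} = 0` on `(0,∞)` with `f(0)=a`, `f'(0)=0`;
`fd` is the derivative of `f` and `gd` the derivative of `|f'|^{p-2} f'`, both continuous
on `[0,∞)`, so that `f ∈ C¹([0,∞))` and `|f'|^{p-2} f' ∈ C¹([0,∞))`. -/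
def IsSol (p a : ℝ) (f fd gd : ℝ → ℝ) : Prop :=
  (∀ r ∈ Set.Ici (0:ℝ), HasDerivWithinAt f (fd r) (Set.Ici 0) r) ∧
  ContinuousOn fd (Set.Ici 0) ∧
  (∀ r ∈ Set.Ici (0:ℝ), HasDerivWithinAt (fun s => |fd s| ^ (p-2) * fd s) (gd r) (Set.Ici 0) r) ∧
  ContinuousOn gd (Set.Ici 0) ∧
  (∀ r ∈ Set.Ioi (0:ℝ), gd r + f r - |fd r| ^ (p-1) = 0) ∧
  f 0 = a ∧ fd 0 = 0

/-- `ψ` is the function associated with `f = f(·,a)` via `ψ(1 - f(r)/a) = |f'(r)|^p/a^p`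
for `r ∈ [0,R(a))`. -/
def PsiRel (p a : ℝ) (f fd ψ : ℝ → ℝ) : Prop :=
  ∀ r : ℝ, 0 ≤ r → (r : EReal) < extTime f → ψ (1 - f r / a) = |fd r| ^ p / a ^ p

section Aux
variable {p a : ℝ} {f fd gd : ℝ → ℝ}

lemma signpow (hp : p ∈ Set.Ioo (1:ℝ) 2) {x : ℝ} (hx : x ≤ 0) :
    |x| ^ (p-2) * x = -(|x| ^ (p-1)) := by
  rcases eq_or_lt_of_le hx with h | h
  · subst h
    simp [Real.zero_rpow (show p - 1 ≠ 0 by intro h'; have := hp.1; nlinarith)]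
  · have hx' : (0:ℝ) < |x| := abs_pos.mpr (ne_of_lt h)
    have h2 : |x| ^ (p-1) = |x| ^ (p-2) * |x| := by
      have := Real.rpow_add_one (ne_of_gt hx') (p-2)
      rw [show p - 2 + 1 = p - 1 by ring] at this
      exact this
    rw [h2, abs_of_neg h]; ring

lemma signpow_neg (hp : p ∈ Set.Ioo (1:ℝ) 2) {x : ℝ} (hx : x < 0) :
    |x| ^ (p-2) * x < 0 := by
  rw [signpow hp (le_of_lt hx)]
  have : (0:ℝ) < |x| ^ (p-1) := Real.rpow_pos_of_pos (abs_pos.mpr (ne_of_lt hx)) _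
  linarith

lemma fd_neg_of_g_neg (hp : p ∈ Set.Ioo (1:ℝ) 2) {x : ℝ} (hg : |x| ^ (p-2) * x < 0) :
    x < 0 := by
  by_contra h
  push_neg at h
  exact absurd hg (not_lt.mpr (mul_nonneg (Real.rpow_nonneg (abs_nonneg x) _) h))

lemma IsSol.contf (hf : IsSol p a f fd gd) : ContinuousOn f (Set.Ici 0) :=
  fun r hr => (hf.1 r hr).continuousWithinAt

lemma IsSol.contg (hf : IsSol p a f fd gd) :
    ContinuousOn (fun s => |fd s| ^ (p-2) * fd s) (Set.Ici 0) :=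
  fun r hr => (hf.2.2.1 r hr).continuousWithinAt

lemma IsSol.gd_zero (hp : p ∈ Set.Ioo (1:ℝ) 2) (hf : IsSol p a f fd gd) : gd 0 = -a := by
  have h1 : Tendsto gd (𝓝[>] 0) (𝓝 (gd 0)) :=
    (hf.2.2.2.1 0 Set.self_mem_Ici).mono_left (nhdsWithin_mono _ Ioi_subset_Ici_self)
  have hcfd : ContinuousWithinAt fd (Set.Ici 0) 0 := hf.2.1 0 Set.self_mem_Ici
  have h2' : ContinuousWithinAt (fun r => |fd r| ^ (p-1) - f r) (Set.Ici 0) 0 :=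
    (hcfd.abs.rpow_const (Or.inr (by linarith [hp.1]))).sub (hf.contf 0 Set.self_mem_Ici)
  have h2 : Tendsto (fun r => |fd r| ^ (p-1) - f r) (𝓝[>] 0)
      (𝓝 (|fd 0| ^ (p-1) - f 0)) :=
    h2'.mono_left (nhdsWithin_mono _ Ioi_subset_Ici_self)
  have heq : gd =ᶠ[𝓝[>] (0:ℝ)] fun r => |fd r| ^ (p-1) - f r := by
    filter_upwards [self_mem_nhdsWithin] with r hr
    have := hf.2.2.2.2.1 r hr
    linarith
  have := tendsto_nhds_unique (h1.congr' heq) h2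
  rw [hf.2.2.2.2.2.2, abs_zero, Real.zero_rpow (by intro h'; nlinarith [hp.1]),
    hf.2.2.2.2.2.1] at this
  rw [this]; ring

end Aux

section Aux2
variable {p a : ℝ} {f fd gd : ℝ → ℝ}

lemma IsSol.g_neg (hp : p ∈ Set.Ioo (1:ℝ) 2) (ha : 0 < a) (hf : IsSol p a f fd gd)
    {b : ℝ} (hfb : ∀ s ∈ Set.Icc (0:ℝ) b, 0 < f s) :
    ∀ r ∈ Set.Ioc (0:ℝ) b, |fd r| ^ (p-2) * fd r < 0 := by
  set g := fun s => |fd s| ^ (p-2) * fd s with hgdef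
  have hg0 : g 0 = 0 := by simp [hgdef, hf.2.2.2.2.2.2]
  have hder0 : HasDerivWithinAt g (gd 0) (Set.Ici 0) 0 := hf.2.2.1 0 Set.self_mem_Ici
  have hslope : Tendsto (slope g 0) (𝓝[Set.Ici 0 \ {0}] 0) (𝓝 (gd 0)) :=
    hasDerivWithinAt_iff_tendsto_slope.mp hder0
  have hIci : Set.Ici (0:ℝ) \ {0} = Set.Ioi 0 := by
    ext x
    simp only [Set.mem_diff, Set.mem_Ici, Set.mem_singleton_iff, Set.mem_Ioi]
    constructor
    · rintro ⟨h1, h2⟩; exact lt_of_le_of_ne h1 (Ne.symm h2)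
    · intro h; exact ⟨le_of_lt h, ne_of_gt h⟩
  rw [hIci, hf.gd_zero hp] at hslope
  have hev : ∀ᶠ s in 𝓝[>] (0:ℝ), slope g 0 s < 0 :=
    hslope.eventually_lt_const (by linarith)
  have hev2 : ∀ᶠ s in 𝓝[>] (0:ℝ), g s < 0 := by
    filter_upwards [hev, self_mem_nhdsWithin] with s hs hs'
    rw [slope_def_field, hg0, sub_zero, sub_zero] at hs
    by_contra hc
    push_neg at hc
    exact absurd hs (not_lt.mpr (div_nonneg hc (le_of_lt hs')))
  obtain ⟨ε, hε, hsmall⟩ := mem_nhdsGT_iff_exists_Ioo_subset.mp hev2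
  simp only [Set.mem_Ioi] at hε
  intro r hr
  by_contra hcon
  push_neg at hcon
  have hrε : ε ≤ r := by
    by_contra h
    push_neg at h
    exact absurd (hsmall ⟨hr.1, h⟩) (not_lt.mpr hcon)
  set Z := (Set.Icc ε b ∩ g ⁻¹' Set.Ici 0) with hZ
  have hZclosed : IsClosed Z :=
    (hf.contg.mono (fun x hx => le_trans (le_of_lt hε) hx.1)).preimage_isClosed_of_isClosed
      isClosed_Icc isClosed_Ici
  have hZne : Z.Nonempty := ⟨r, ⟨hrε, hr.2⟩, hcon⟩
  have hZbdd : BddBelow Z := ⟨ε, fun x hx => hx.1.1⟩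
  set r₁ := sInf Z with hr₁def
  have hr₁Z : r₁ ∈ Z := hZclosed.csInf_mem hZne hZbdd
  have hr₁pos : 0 < r₁ := lt_of_lt_of_le hε hr₁Z.1.1
  have hgneg : ∀ s ∈ Set.Ioo (0:ℝ) r₁, g s < 0 := by
    intro s hs
    rcases lt_or_ge s ε with h | h
    · exact hsmall ⟨hs.1, h⟩
    · by_contra hc
      push_neg at hc
      have : s ∈ Z := ⟨⟨h, le_trans (le_of_lt hs.2) hr₁Z.1.2⟩, hc⟩
      exact absurd (csInf_le hZbdd this) (not_le.mpr hs.2)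
  haveI hNB : (𝓝[Set.Ioo (0:ℝ) r₁] r₁).NeBot := by
    rw [nhdsWithin_Ioo_eq_nhdsLT hr₁pos]; infer_instance
  have hg_r₁_le : g r₁ ≤ 0 := by
    have hcont : Tendsto g (𝓝[Set.Ioo (0:ℝ) r₁] r₁) (𝓝 (g r₁)) :=
      (hf.contg r₁ (le_of_lt hr₁pos)).mono_left
        (nhdsWithin_mono _ (fun x hx => le_of_lt hx.1))
    exact le_of_tendsto hcont
      (by filter_upwards [self_mem_nhdsWithin] with s hs; exact le_of_lt (hgneg s hs))
  have hg_r₁ : g r₁ = 0 := le_antisymm hg_r₁_le hr₁Z.2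
  have hfd_r₁ : fd r₁ = 0 := by
    rcases lt_trichotomy (fd r₁) 0 with h | h | h
    · exact absurd hg_r₁ (ne_of_lt (signpow_neg hp h))
    · exact h
    · have : 0 < g r₁ :=
        mul_pos (Real.rpow_pos_of_pos (abs_pos.mpr (ne_of_gt h)) _) h
      exact absurd hg_r₁ (ne_of_gt this)
  have hfr₁pos : 0 < f r₁ := hfb r₁ ⟨le_of_lt hr₁pos, hr₁Z.1.2⟩
  have hgd_r₁ : gd r₁ = -f r₁ := by
    have h1 := hf.2.2.2.2.1 r₁ hr₁pos
    rw [hfd_r₁, abs_zero, Real.zero_rpow (show p - 1 ≠ 0 by intro h'; nlinarith [hp.1])] at h1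
    linarith
  have hslope₁ : Tendsto (slope g r₁) (𝓝[Set.Ioo (0:ℝ) r₁] r₁) (𝓝 (gd r₁)) :=
    (hasDerivWithinAt_iff_tendsto_slope.mp (hf.2.2.1 r₁ (le_of_lt hr₁pos))).mono_left
      (nhdsWithin_mono _ (fun x hx => ⟨le_of_lt hx.1, ne_of_lt hx.2⟩))
  have hge : 0 ≤ gd r₁ := by
    refine ge_of_tendsto hslope₁ ?_
    filter_upwards [self_mem_nhdsWithin] with s hs
    rw [slope_def_field, hg_r₁, sub_zero]
    have h1 : g s < 0 := hgneg s hs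
    have h2 : s - r₁ < 0 := by linarith [hs.2]
    exact le_of_lt (div_pos_iff.mpr (Or.inr ⟨h1, h2⟩))
  linarith

lemma IsSol.fd_neg (hp : p ∈ Set.Ioo (1:ℝ) 2) (ha : 0 < a) (hf : IsSol p a f fd gd)
    {b : ℝ} (hfb : ∀ s ∈ Set.Icc (0:ℝ) b, 0 < f s) :
    ∀ r ∈ Set.Ioc (0:ℝ) b, fd r < 0 :=
  fun r hr => fd_neg_of_g_neg hp (hf.g_neg hp ha hfb r hr)

end Aux2

section Aux3
variable {p a : ℝ} {f fd gd ψ : ℝ → ℝ}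

lemma ratio_tendsto (hp : p ∈ Set.Ioo (1:ℝ) 2) (ha : 0 < a)
    (hrel : PsiRel p a f fd ψ)
    (hκ : Tendsto (fun y => ψ y * (1-y) ^ (-p)) (𝓝[<] (1:ℝ)) (𝓝 ((p-1) ^ (-p))))
    {l : Filter ℝ} [l.NeBot]
    (hev : ∀ᶠ r in l, 0 ≤ r ∧ 0 < f r ∧ (r : EReal) < extTime f)
    (hf0 : Tendsto f l (𝓝 0)) :
    Tendsto (fun r => |fd r| / f r) l (𝓝 (1/(p-1))) := by
  have hp1 : (0:ℝ) < p - 1 := by linarith [hp.1]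
  have hpne : p ≠ 0 := by linarith [hp.1]
  have hy : Tendsto (fun r => 1 - f r / a) l (𝓝[<] (1:ℝ)) := by
    rw [tendsto_nhdsWithin_iff]
    constructor
    · have : Tendsto (fun r => 1 - f r / a) l (𝓝 (1 - 0 / a)) :=
        tendsto_const_nhds.sub (hf0.div_const a)
      simpa using this
    · filter_upwards [hev] with r hr
      have : 0 < f r / a := div_pos hr.2.1 ha
      simp only [Set.mem_Iio]; linarith
  have hcomp := hκ.comp hy
  have htend : Tendsto (fun r => (|fd r| / f r) ^ p) l (𝓝 ((p-1) ^ (-p))) := by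
    refine hcomp.congr' ?_
    filter_upwards [hev] with r hr
    obtain ⟨hr0, hfr, hrext⟩ := hr
    have hpsi := hrel r hr0 hrext
    have hfa : (0:ℝ) < f r / a := div_pos hfr ha
    have e0 : 1 - (1 - f r / a) = f r / a := by ring
    have e1 : (f r / a) ^ (-p) = a ^ p / f r ^ p := by
      rw [Real.rpow_neg (le_of_lt hfa), Real.div_rpow (le_of_lt hfr) ha.le, inv_div]
    have e2 : (|fd r| / f r) ^ p = |fd r| ^ p / f r ^ p :=
      Real.div_rpow (abs_nonneg _) (le_of_lt hfr) p
    have hfp : f r ^ p ≠ 0 := ne_of_gt (Real.rpow_pos_of_pos hfr _)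
    have hap : a ^ p ≠ 0 := ne_of_gt (Real.rpow_pos_of_pos ha _)
    simp only [Function.comp_apply, e0, hpsi, e1, e2]
    field_simp
  have hcont : ContinuousAt (fun z : ℝ => z ^ (1/p)) ((p-1) ^ (-p)) :=
    Real.continuousAt_rpow_const _ _ (Or.inl (ne_of_gt (Real.rpow_pos_of_pos hp1 _)))
  have h2 := (hcont.tendsto.comp htend)
  have hval : ((p-1) ^ (-p)) ^ (1/p) = 1/(p-1) := by
    rw [← Real.rpow_mul (le_of_lt hp1), show -p * (1/p) = -1 by field_simp,
      Real.rpow_neg_one, one_div]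
  rw [hval] at h2
  refine h2.congr' ?_
  filter_upwards [hev] with r hr
  have hq : 0 ≤ |fd r| / f r := div_nonneg (abs_nonneg _) (le_of_lt hr.2.1)
  simp only [Function.comp_apply]
  rw [← Real.rpow_mul hq, mul_one_div, div_self hpne, Real.rpow_one]

lemma loglin_mono {f fd : ℝ → ℝ} {c s M : ℝ} (hcs : c ≤ s)
    (hder : ∀ r ∈ Set.Icc c s, HasDerivAt f (fd r) r)
    (hpos : ∀ r ∈ Set.Icc c s, 0 < f r)
    (hM : ∀ r ∈ Set.Icc c s, 0 ≤ fd r / f r + M) :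
    Real.log (f c) + M * c ≤ Real.log (f s) + M * s := by
  set φ := fun r => Real.log (f r) + M * r with hφdef
  have hφder : ∀ r ∈ Set.Icc c s, HasDerivAt φ (fd r / f r + M) r := by
    intro r hr
    exact ((hder r hr).log (ne_of_gt (hpos r hr))).add
      (by simpa using (hasDerivAt_id r).const_mul M)
  have hmono : MonotoneOn φ (Set.Icc c s) := by
    refine monotoneOn_of_deriv_nonneg (convex_Icc c s)
      (fun r hr => (hφder r hr).continuousAt.continuousWithinAt)
      (fun r hr => (hφder r (Set.mem_of_mem_of_subset hr (by rw [interior_Icc]; exact Set.Ioo_subset_Icc_self))).differentiableAt.differentiableWithinAt) ?_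
    intro r hr
    rw [interior_Icc] at hr
    rw [(hφder r (Set.Ioo_subset_Icc_self hr)).deriv]
    exact hM r (Set.Ioo_subset_Icc_self hr)
  exact hmono (Set.left_mem_Icc.mpr hcs) (Set.right_mem_Icc.mpr hcs) hcs

lemma loglin_anti {f fd : ℝ → ℝ} {c s M : ℝ} (hcs : c ≤ s)
    (hder : ∀ r ∈ Set.Icc c s, HasDerivAt f (fd r) r)
    (hpos : ∀ r ∈ Set.Icc c s, 0 < f r)
    (hM : ∀ r ∈ Set.Icc c s, fd r / f r + M ≤ 0) :
    Real.log (f s) + M * s ≤ Real.log (f c) + M * c := by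
  set φ := fun r => Real.log (f r) + M * r with hφdef
  have hφder : ∀ r ∈ Set.Icc c s, HasDerivAt φ (fd r / f r + M) r := by
    intro r hr
    exact ((hder r hr).log (ne_of_gt (hpos r hr))).add
      (by simpa using (hasDerivAt_id r).const_mul M)
  have hanti : AntitoneOn φ (Set.Icc c s) := by
    refine antitoneOn_of_deriv_nonpos (convex_Icc c s)
      (fun r hr => (hφder r hr).continuousAt.continuousWithinAt)
      (fun r hr => (hφder r (Set.mem_of_mem_of_subset hr (by rw [interior_Icc]; exact Set.Ioo_subset_Icc_self))).differentiableAt.differentiableWithinAt) ?_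
    intro r hr
    rw [interior_Icc] at hr
    rw [(hφder r (Set.Ioo_subset_Icc_self hr)).deriv]
    exact hM r (Set.Ioo_subset_Icc_self hr)
  exact hanti (Set.left_mem_Icc.mpr hcs) (Set.right_mem_Icc.mpr hcs) hcs

end Aux3

section Aux4
variable {p a : ℝ} {f fd gd ψ : ℝ → ℝ}

lemma no_extinction (hp : p ∈ Set.Ioo (1:ℝ) 2) (ha : 0 < a)
    (hf : IsSol p a f fd gd) (hrel : PsiRel p a f fd ψ)
    (hκ : Tendsto (fun y => ψ y * (1-y) ^ (-p)) (𝓝[<] (1:ℝ)) (𝓝 ((p-1) ^ (-p)))) :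
    ∀ r : ℝ, 0 ≤ r → 0 < f r := by
  have hp1 : (0:ℝ) < p - 1 := by linarith [hp.1]
  have hf0a : f 0 = a := hf.2.2.2.2.2.1
  by_contra hcon
  push_neg at hcon
  obtain ⟨r₂, hr₂0, hr₂⟩ := hcon
  -- there is a zero of f in (0,∞)
  have hzero : ∃ r₀, 0 < r₀ ∧ f r₀ = 0 := by
    rcases eq_or_lt_of_le hr₂ with h | h
    · have hne : r₂ ≠ 0 := by
        intro h0; rw [h0, hf0a] at h; exact (ne_of_gt ha) h
      exact ⟨r₂, lt_of_le_of_ne hr₂0 (Ne.symm hne), h⟩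
    · have hivt := intermediate_value_Icc' hr₂0 (hf.contf.mono (fun x hx => hx.1))
      have h0mem : (0:ℝ) ∈ Set.Icc (f r₂) (f 0) := ⟨le_of_lt h, by rw [hf0a]; exact ha.le⟩
      obtain ⟨c, hc, hfc⟩ := hivt h0mem
      have hcne : c ≠ 0 := by
        intro h0; rw [h0, hf0a] at hfc; exact (ne_of_gt ha) hfc
      exact ⟨c, lt_of_le_of_ne hc.1 (Ne.symm hcne), hfc⟩
  obtain ⟨r₀, hr₀pos, hr₀⟩ := hzero
  -- f positive near 0
  have hnear : ∃ ε > 0, ∀ s, 0 ≤ s → s < ε → 0 < f s := by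
    have h1 : Tendsto f (𝓝[Set.Ici 0] 0) (𝓝 a) := by
      have := hf.contf 0 Set.self_mem_Ici
      rwa [ContinuousWithinAt, hf0a] at this
    have h2 : ∀ᶠ s in 𝓝[Set.Ici 0] (0:ℝ), 0 < f s := h1.eventually_const_lt ha
    rw [eventually_nhdsWithin_iff, Metric.eventually_nhds_iff] at h2
    obtain ⟨ε, hε, hball⟩ := h2
    refine ⟨ε, hε, fun s hs0 hsε => hball ?_ hs0⟩
    rw [Real.dist_eq, sub_zero, abs_of_nonneg hs0]; exact hsε
  obtain ⟨ε, hε, hnear⟩ := hnear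
  have hεr₀ : ε ≤ r₀ := by
    by_contra h; push_neg at h
    exact (ne_of_gt (hnear r₀ hr₀pos.le h)) hr₀
  -- first zero R
  set T := Set.Icc ε r₀ ∩ f ⁻¹' {0} with hTdef
  have hTclosed : IsClosed T :=
    (hf.contf.mono (fun x hx => le_trans hε.le hx.1)).preimage_isClosed_of_isClosed
      isClosed_Icc isClosed_singleton
  have hTne : T.Nonempty := ⟨r₀, ⟨hεr₀, le_refl _⟩, hr₀⟩
  have hTbdd : BddBelow T := ⟨ε, fun x hx => hx.1.1⟩
  set R := sInf T with hRdef
  have hRT : R ∈ T := hTclosed.csInf_mem hTne hTbdd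
  have hRpos : 0 < R := lt_of_lt_of_le hε hRT.1.1
  have hfR : f R = 0 := hRT.2
  -- f positive on [0, R)
  have hfpos : ∀ s, 0 ≤ s → s < R → 0 < f s := by
    intro s hs0 hsR
    by_contra hc
    push_neg at hc
    have hsr₀ : s ≤ r₀ := le_trans hsR.le hRT.1.2
    have hzero' : ∃ c', 0 ≤ c' ∧ c' ≤ s ∧ f c' = 0 := by
      rcases eq_or_lt_of_le hc with h | h
      · exact ⟨s, hs0, le_refl _, h⟩
      · have hivt := intermediate_value_Icc' hs0 (hf.contf.mono (fun x hx => hx.1))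
        obtain ⟨c', hc', hfc'⟩ := hivt ⟨le_of_lt h, by rw [hf0a]; exact ha.le⟩
        exact ⟨c', hc'.1, hc'.2, hfc'⟩
    obtain ⟨c', hc'0, hc's, hfc'⟩ := hzero'
    have hc'ε : ε ≤ c' := by
      by_contra h; push_neg at h
      exact (ne_of_gt (hnear c' hc'0 h)) hfc'
    have : c' ∈ T := ⟨⟨hc'ε, le_trans hc's hsr₀⟩, hfc'⟩
    have := csInf_le hTbdd this
    rw [← hRdef] at this
    linarith
  -- extTime bound
  have hext : ∀ r : ℝ, 0 ≤ r → r < R → (r : EReal) < extTime f := by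
    intro r hr0 hrR
    have hRle : (R : EReal) ≤ extTime f := by
      refine le_sInf ?_
      rintro x ⟨r', hr'pos, hfr', rfl⟩
      rw [EReal.coe_le_coe_iff]
      by_contra h
      push_neg at h
      exact (ne_of_gt (hfpos r' hr'pos.le h)) hfr'
    exact lt_of_lt_of_le (EReal.coe_lt_coe_iff.mpr hrR) hRle
  -- fd negative on (0,R)
  have hfd : ∀ r, 0 < r → r < R → fd r < 0 := by
    intro r h0 hR
    have hb : (r + R)/2 < R := by linarith
    refine hf.fd_neg hp ha (fun s hs => hfpos s hs.1 (lt_of_le_of_lt hs.2 hb)) r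
      ⟨h0, by linarith⟩
  -- f tends to 0 at R⁻
  have hf0 : Tendsto f (𝓝[<] R) (𝓝 0) := by
    have h1 : Tendsto f (𝓝[Set.Ici 0] R) (𝓝 0) := by
      have := hf.contf R hRpos.le
      rwa [ContinuousWithinAt, hfR] at this
    rw [← nhdsWithin_Ioo_eq_nhdsLT hRpos]
    exact h1.mono_left (nhdsWithin_mono _ (fun x hx => hx.1.le))
  -- ratio tendsto
  have hIooMem : Set.Ioo 0 R ∈ 𝓝[<] R :=
    Ioo_mem_nhdsLT_of_mem ⟨hRpos, le_refl _⟩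
  have hev : ∀ᶠ r in 𝓝[<] R, 0 ≤ r ∧ 0 < f r ∧ (r : EReal) < extTime f := by
    filter_upwards [hIooMem] with r hr
    exact ⟨hr.1.le, hfpos r hr.1.le hr.2, hext r hr.1.le hr.2⟩
  have hrt := ratio_tendsto hp ha hrel hκ hev hf0
  set M := 1/(p-1) + 1 with hMdef
  have hMpos : 0 < M := by rw [hMdef]; positivity
  have hbd : ∀ᶠ r in 𝓝[<] R, |fd r| / f r < M :=
    hrt.eventually_lt_const (lt_add_one _)
  obtain ⟨c, hcR, hsub⟩ := mem_nhdsLT_iff_exists_Ioo_subset.mp (hbd.and hIooMem)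
  simp only [Set.mem_Iio] at hcR
  set c₁ := (max c 0 + R)/2 with hc₁def
  have hc₁c : c < c₁ := by
    have : c ≤ max c 0 := le_max_left _ _
    have : max c 0 < R := max_lt hcR hRpos
    simp only [hc₁def]
    nlinarith [le_max_left c 0]
  have hc₁R : c₁ < R := by
    have : max c 0 < R := max_lt hcR hRpos
    simp only [hc₁def]; linarith
  have hc₁pos : 0 < c₁ := by
    have : (0:ℝ) ≤ max c 0 := le_max_right _ _
    simp only [hc₁def]; linarith
  -- lower bound for log f on [c₁, R)
  have hlog : ∀ t, c₁ ≤ t → t < R →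
      Real.log (f c₁) - M * (R - c₁) ≤ Real.log (f t) := by
    intro t hc₁t htR
    have hkey := loglin_mono (f := f) (fd := fd) (M := M) hc₁t ?_ ?_ ?_
    · have h1 : Real.log (f c₁) + M * c₁ ≤ Real.log (f t) + M * t := hkey
      nlinarith [hMpos]
    · intro r hr
      have hr0 : 0 < r := lt_of_lt_of_le hc₁pos hr.1
      exact (hf.1 r hr0.le).hasDerivAt (Ici_mem_nhds hr0)
    · intro r hr
      exact hfpos r (lt_of_lt_of_le hc₁pos hr.1).le (lt_of_le_of_lt hr.2 htR)
    · intro r hr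
      have hrIoo : r ∈ Set.Ioo c R := ⟨lt_of_lt_of_le hc₁c hr.1, lt_of_le_of_lt hr.2 htR⟩
      have hrbd := (hsub hrIoo).1
      have hrf : 0 < f r := hfpos r (lt_of_lt_of_le hc₁pos hr.1).le hrIoo.2
      have hrfd : fd r < 0 := hfd r (lt_of_lt_of_le hc₁pos hr.1) hrIoo.2
      have : fd r / f r = -(|fd r| / f r) := by
        rw [abs_of_neg hrfd]; ring
      rw [this]; linarith
  -- contradiction
  have hlb : ∀ᶠ t in 𝓝[<] R, Real.exp (Real.log (f c₁) - M * (R - c₁)) ≤ f t := by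
    have : Set.Ioo c₁ R ∈ 𝓝[<] R := Ioo_mem_nhdsLT_of_mem ⟨hc₁R, le_refl _⟩
    filter_upwards [this] with t ht
    have h1 := hlog t ht.1.le ht.2
    calc Real.exp (Real.log (f c₁) - M * (R - c₁)) ≤ Real.exp (Real.log (f t)) :=
          Real.exp_le_exp.mpr h1
      _ = f t := Real.exp_log (hfpos t (lt_of_lt_of_le hc₁pos ht.1.le).le ht.2)
  have := ge_of_tendsto hf0 hlb
  exact absurd this (not_le.mpr (Real.exp_pos _))

end Aux4

section Aux5
variable {p a : ℝ} {f fd gd ψ : ℝ → ℝ}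

lemma lin_anti {f fd : ℝ → ℝ} {c s M : ℝ} (hcs : c ≤ s)
    (hder : ∀ r ∈ Set.Icc c s, HasDerivAt f (fd r) r)
    (hM : ∀ r ∈ Set.Icc c s, fd r + M ≤ 0) :
    f s + M * s ≤ f c + M * c := by
  set φ := fun r => f r + M * r with hφdef
  have hφder : ∀ r ∈ Set.Icc c s, HasDerivAt φ (fd r + M) r := by
    intro r hr
    exact (hder r hr).add (by simpa using (hasDerivAt_id r).const_mul M)
  have hanti : AntitoneOn φ (Set.Icc c s) := by
    refine antitoneOn_of_deriv_nonpos (convex_Icc c s)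
      (fun r hr => (hφder r hr).continuousAt.continuousWithinAt)
      (fun r hr => (hφder r (Set.mem_of_mem_of_subset hr
        (by rw [interior_Icc]; exact Set.Ioo_subset_Icc_self))).differentiableAt.differentiableWithinAt) ?_
    intro r hr
    rw [interior_Icc] at hr
    rw [(hφder r (Set.Ioo_subset_Icc_self hr)).deriv]
    exact hM r (Set.Ioo_subset_Icc_self hr)
  exact hanti (Set.left_mem_Icc.mpr hcs) (Set.right_mem_Icc.mpr hcs) hcs

lemma IsSol.fd_nonpos (hp : p ∈ Set.Ioo (1:ℝ) 2) (ha : 0 < a) (hf : IsSol p a f fd gd)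
    (hpos : ∀ r : ℝ, 0 ≤ r → 0 < f r) :
    ∀ r : ℝ, 0 ≤ r → fd r ≤ 0 := by
  intro r hr
  rcases eq_or_lt_of_le hr with h | h
  · rw [← h, hf.2.2.2.2.2.2]
  · exact le_of_lt (hf.fd_neg hp ha (fun s hs => hpos s hs.1) r ⟨h, le_refl r⟩)

lemma IsSol.integral_id (hp : p ∈ Set.Ioo (1:ℝ) 2) (ha : 0 < a) (hf : IsSol p a f fd gd)
    (hpos : ∀ r : ℝ, 0 ≤ r → 0 < f r) :
    ∀ r : ℝ, 0 ≤ r → Real.exp r * |fd r| ^ (p-1) = ∫ σ in (0:ℝ)..r, Real.exp σ * f σ := by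
  have hp1ne : p - 1 ≠ 0 := by intro h; nlinarith [hp.1]
  have hfdle := hf.fd_nonpos hp ha hpos
  set g := fun s => |fd s| ^ (p-2) * fd s with hgdef
  set E := fun s => Real.exp s * g s with hEdef
  have hEder : ∀ s ∈ Set.Ici (0:ℝ), HasDerivWithinAt E (-(Real.exp s * f s)) (Set.Ici 0) s := by
    intro s hs
    have h1 : HasDerivWithinAt E (Real.exp s * g s + Real.exp s * gd s) (Set.Ici 0) s :=
      ((Real.hasDerivAt_exp s).hasDerivWithinAt).mul (hf.2.2.1 s hs)
    convert h1 using 1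
    rcases eq_or_lt_of_le (Set.mem_Ici.mp hs) with h | h
    · have hfd0 : fd 0 = 0 := hf.2.2.2.2.2.2
      rw [← h]
      simp [hgdef, hfd0, hf.gd_zero hp, hf.2.2.2.2.2.1]
    · have hgs : g s = -(|fd s| ^ (p-1)) := signpow hp (hfdle s hs)
      have hgds : gd s = |fd s| ^ (p-1) - f s := by
        have := hf.2.2.2.2.1 s h
        linarith
      rw [hgs, hgds]; ring
  intro r hr
  rcases eq_or_lt_of_le hr with h | h
  · rw [← h]
    simp [hf.2.2.2.2.2.2, Real.zero_rpow hp1ne]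
  · have hcontE : ContinuousOn E (Set.Icc 0 r) :=
      (Real.continuous_exp.continuousOn).mul (hf.contg.mono (fun x hx => hx.1))
    have hderiv : ∀ x ∈ Set.Ioo (0:ℝ) r, HasDerivWithinAt E (-(Real.exp x * f x)) (Set.Ioi x) x :=
      fun x hx => (hEder x hx.1.le).mono (fun y hy => le_trans hx.1.le (le_of_lt hy))
    have hint : IntervalIntegrable (fun σ => -(Real.exp σ * f σ)) volume 0 r := by
      apply ContinuousOn.intervalIntegrable
      rw [Set.uIcc_of_le hr]
      exact ((Real.continuous_exp.continuousOn).mul (hf.contf.mono (fun x hx => hx.1))).neg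
    have hftc := intervalIntegral.integral_eq_sub_of_hasDeriv_right_of_le hr hcontE hderiv hint
    have hE0 : E 0 = 0 := by simp [hEdef, hgdef, hf.2.2.2.2.2.2]
    have hEr : E r = -(Real.exp r * |fd r| ^ (p-1)) := by
      have hgr : g r = -(|fd r| ^ (p-1)) := signpow hp (hfdle r hr)
      show Real.exp r * g r = _
      rw [hgr]; ring
    rw [intervalIntegral.integral_neg] at hftc
    rw [hE0, hEr] at hftc
    linarith [hftc]

lemma IsSol.antitone (hp : p ∈ Set.Ioo (1:ℝ) 2) (ha : 0 < a) (hf : IsSol p a f fd gd)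
    (hpos : ∀ r : ℝ, 0 ≤ r → 0 < f r) :
    AntitoneOn f (Set.Ici 0) := by
  have hfdle := hf.fd_nonpos hp ha hpos
  refine antitoneOn_of_deriv_nonpos (convex_Ici 0) hf.contf ?_ ?_
  · intro x hx
    rw [interior_Ici] at hx
    exact ((hf.1 x (Set.mem_Ici.mpr (le_of_lt hx))).hasDerivAt (Ici_mem_nhds hx)).differentiableAt.differentiableWithinAt
  · intro x hx
    rw [interior_Ici] at hx
    rw [((hf.1 x (Set.mem_Ici.mpr (le_of_lt hx))).hasDerivAt (Ici_mem_nhds hx)).deriv]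
    exact hfdle x (le_of_lt hx)

lemma IsSol.tendsto_zero (hp : p ∈ Set.Ioo (1:ℝ) 2) (ha : 0 < a) (hf : IsSol p a f fd gd)
    (hpos : ∀ r : ℝ, 0 ≤ r → 0 < f r) :
    Tendsto f atTop (𝓝 0) := by
  have hp1 : (0:ℝ) < p - 1 := by linarith [hp.1]
  have hanti := hf.antitone hp ha hpos
  have hid := hf.integral_id hp ha hpos
  have key : ∀ ε : ℝ, 0 < ε → ∃ r₀ : ℝ, 0 ≤ r₀ ∧ f r₀ < ε := by
    intro ε hεpos
    by_contra hc
    push_neg at hc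
    -- ∀ r ≥ 0, ε ≤ f r
    have hbd : ∀ r : ℝ, 0 ≤ r → ε * (Real.exp r - 1) ≤ Real.exp r * |fd r| ^ (p-1) := by
      intro r hr
      rw [hid r hr]
      have h1 : ∫ σ in (0:ℝ)..r, ε * Real.exp σ ≤ ∫ σ in (0:ℝ)..r, Real.exp σ * f σ := by
        refine intervalIntegral.integral_mono_on hr ?_ ?_ ?_
        · exact (continuous_const.mul Real.continuous_exp).intervalIntegrable 0 r
        · apply ContinuousOn.intervalIntegrable
          rw [Set.uIcc_of_le hr]
          exact (Real.continuous_exp.continuousOn).mul (hf.contf.mono (fun x hx => hx.1))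
        · intro x hx
          have := hc x hx.1
          have hex : 0 < Real.exp x := Real.exp_pos x
          nlinarith
      calc ε * (Real.exp r - 1) = ∫ σ in (0:ℝ)..r, ε * Real.exp σ := by
            rw [intervalIntegral.integral_const_mul, integral_exp, Real.exp_zero]
        _ ≤ _ := h1
    -- for r ≥ 1 : |fd r|^(p-1) ≥ ε/2
    set c := (ε/2) ^ ((p-1)⁻¹) with hcdef
    have hcpos : 0 < c := Real.rpow_pos_of_pos (by linarith) _
    have hfdbd : ∀ r : ℝ, 1 ≤ r → fd r + c ≤ 0 := by
      intro r hr
      have hr0 : (0:ℝ) ≤ r := by linarith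
      have h1 := hbd r hr0
      have hex : 0 < Real.exp r := Real.exp_pos r
      have h2 : Real.exp r ≥ Real.exp 1 := Real.exp_le_exp.mpr hr
      have he1 : (2:ℝ) ≤ Real.exp 1 := by
        have := Real.add_one_le_exp 1
        linarith
      have h3 : ε * (Real.exp r / 2) ≤ Real.exp r * |fd r| ^ (p-1) := by
        nlinarith
      have h4 : ε / 2 ≤ |fd r| ^ (p-1) := by
        have h3' : Real.exp r * (ε/2) ≤ Real.exp r * (|fd r| ^ (p-1)) := by linarith
        exact le_of_mul_le_mul_left h3' hex
      have h5 : c ≤ |fd r| := by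
        calc c = (ε/2) ^ ((p-1)⁻¹) := rfl
          _ ≤ (|fd r| ^ (p-1)) ^ ((p-1)⁻¹) :=
            Real.rpow_le_rpow (by linarith) h4 (by positivity)
          _ = |fd r| := by
            rw [← Real.rpow_mul (abs_nonneg _), mul_inv_cancel₀ (by linarith), Real.rpow_one]
      have h6 : fd r < 0 := hf.fd_neg hp ha (fun s hs => hpos s hs.1) r ⟨by linarith, le_refl r⟩
      rw [abs_of_neg h6] at h5
      linarith
    -- linear decay to -∞
    set s := 1 + f 1 / c with hsdef
    have hs1 : 1 ≤ s := by
      have : 0 < f 1 / c := div_pos (hpos 1 (by norm_num)) hcpos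
      rw [hsdef]; linarith
    have hlin := lin_anti (f := f) (fd := fd) (M := c) hs1 ?_ ?_
    · have hfs : 0 < f s := hpos s (by linarith)
      have : f s + c * s ≤ f 1 + c * 1 := hlin
      rw [hsdef] at this
      have hc' : c * (1 + f 1 / c) = c + f 1 := by field_simp
      rw [hc'] at this
      linarith
    · intro r hr
      have hr0 : 0 < r := by have := hr.1; linarith
      exact (hf.1 r hr0.le).hasDerivAt (Ici_mem_nhds hr0)
    · intro r hr
      exact hfdbd r hr.1
  rw [Metric.tendsto_atTop]
  intro ε hεpos
  obtain ⟨r₀, hr₀0, hr₀⟩ := key ε hεpos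
  refine ⟨r₀, fun r hr => ?_⟩
  rw [Real.dist_eq, sub_zero, abs_of_pos (hpos r (le_trans hr₀0 hr))]
  exact lt_of_le_of_lt (hanti hr₀0 (le_trans hr₀0 hr) hr) hr₀
end Aux5


/-- If `ψ(y)(1-y)^{-p} → (p-1)^{-p}` as `y → 1` (so that `R(a) = ∞`),
then `I := ∫_0^∞ e^σ f(σ) dσ` is finite, `e^r |f'(r)|^{p-1} → I` as `r → ∞`, and
`e^{r/(p-1)} f(r) → (p-1) I^{1/(p-1)} > 0` as `r → ∞`. -/
theorem stmt18 (p a : ℝ) (hp : p ∈ Set.Ioo (1:ℝ) 2) (ha : 0 < a)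
    (f fd gd ψ : ℝ → ℝ) (hf : IsSol p a f fd gd) (hrel : PsiRel p a f fd ψ)
    (hκ : Tendsto (fun y => ψ y * (1-y) ^ (-p)) (𝓝[<] (1:ℝ)) (𝓝 ((p-1) ^ (-p)))) :
    extTime f = ⊤ ∧
    IntegrableOn (fun σ => Real.exp σ * f σ) (Set.Ioi 0) volume ∧
    Tendsto (fun r => Real.exp r * |fd r| ^ (p-1)) atTop
      (𝓝 (∫ σ in Set.Ioi (0:ℝ), Real.exp σ * f σ)) ∧
    0 < (p-1) * (∫ σ in Set.Ioi (0:ℝ), Real.exp σ * f σ) ^ (1/(p-1)) ∧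
    Tendsto (fun r => Real.exp (r/(p-1)) * f r) atTop
      (𝓝 ((p-1) * (∫ σ in Set.Ioi (0:ℝ), Real.exp σ * f σ) ^ (1/(p-1)))) := by
  have hp1 : (0:ℝ) < p - 1 := by linarith [hp.1]
  have hpos := no_extinction hp ha hf hrel hκ
  -- extinction time is infinite
  have hTop : extTime f = ⊤ := by
    have hempty : {x : EReal | ∃ r : ℝ, 0 < r ∧ f r = 0 ∧ x = (r : EReal)} = ∅ := by
      ext x
      simp only [Set.mem_setOf_eq, Set.mem_empty_iff_false, iff_false, not_exists]
      rintro r ⟨hr, hfr, rfl⟩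
      exact (ne_of_gt (hpos r hr.le)) hfr
    rw [extTime, hempty, sInf_empty]
  have hid := hf.integral_id hp ha hpos
  have hanti := hf.antitone hp ha hpos
  have hf0 := hf.tendsto_zero hp ha hpos
  have hfdneg : ∀ r : ℝ, 0 < r → fd r < 0 := fun r hr =>
    hf.fd_neg hp ha (fun s hs => hpos s hs.1) r ⟨hr, le_refl r⟩
  -- ratio limit
  have hev : ∀ᶠ r in atTop, 0 ≤ r ∧ 0 < f r ∧ (r : EReal) < extTime f := by
    filter_upwards [eventually_ge_atTop (0:ℝ)] with r hr
    exact ⟨hr, hpos r hr, by rw [hTop]; exact EReal.coe_lt_top r⟩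
  have hrt := ratio_tendsto hp ha hrel hκ hev hf0
  have hk1 : 1 < 1/(p-1) := by rw [lt_div_iff₀ hp1]; linarith [hp.2]
  set c : ℝ := (1 + 1/(p-1))/2 with hcdef
  have hc1 : 1 < c := by rw [hcdef]; linarith
  have hck : c < 1/(p-1) := by rw [hcdef]; linarith
  have hevc : ∀ᶠ r in atTop, c < |fd r| / f r := hrt.eventually_const_lt hck
  obtain ⟨r₀, hr₀⟩ := eventually_atTop.mp hevc
  set r₁ : ℝ := max r₀ 1 with hr₁def
  have hr₁1 : 1 ≤ r₁ := le_max_right _ _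
  have hr₁pos : 0 < r₁ := lt_of_lt_of_le one_pos hr₁1
  have hprop : ∀ r, r₁ ≤ r → c < |fd r| / f r := fun r hr =>
    hr₀ r (le_trans (le_max_left _ _) hr)
  -- exponential decay
  have hdecay : ∀ s, r₁ ≤ s → f s ≤ (f r₁ * Real.exp (c * r₁)) * Real.exp (-c * s) := by
    intro s hs
    have hspos : 0 < s := lt_of_lt_of_le hr₁pos hs
    have hkey := loglin_anti (f := f) (fd := fd) (M := c) hs ?_ ?_ ?_
    · have hfs : 0 < f s := hpos s hspos.le
      have hfr₁ : 0 < f r₁ := hpos r₁ hr₁pos.le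
      have h1 : f s = Real.exp (Real.log (f s)) := (Real.exp_log hfs).symm
      rw [h1]
      calc Real.exp (Real.log (f s)) ≤ Real.exp (Real.log (f r₁) + c * r₁ + -c * s) :=
            Real.exp_le_exp.mpr (by linarith)
        _ = (f r₁ * Real.exp (c * r₁)) * Real.exp (-c * s) := by
            rw [Real.exp_add, Real.exp_add, Real.exp_log hfr₁]
    · intro r hr
      have hr0 : 0 < r := lt_of_lt_of_le hr₁pos hr.1
      exact (hf.1 r hr0.le).hasDerivAt (Ici_mem_nhds hr0)
    · intro r hr
      exact hpos r (lt_of_lt_of_le hr₁pos hr.1).le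
    · intro r hr
      have hr0 : 0 < r := lt_of_lt_of_le hr₁pos hr.1
      have hratio := hprop r hr.1
      have hfdr : fd r < 0 := hfdneg r hr0
      have : fd r / f r = -(|fd r| / f r) := by rw [abs_of_neg hfdr]; ring
      rw [this]; linarith
  -- integrability
  have hcont0 : ContinuousOn (fun σ => Real.exp σ * f σ) (Set.Ici 0) :=
    (Real.continuous_exp.continuousOn).mul hf.contf
  have hint : IntegrableOn (fun σ => Real.exp σ * f σ) (Set.Ioi 0) volume := by
    rw [← Set.Ioc_union_Ioi_eq_Ioi hr₁pos.le]
    refine MeasureTheory.IntegrableOn.union ?_ ?_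
    · exact ((hcont0.mono (fun x hx => hx.1)).integrableOn_Icc).mono_set
        Set.Ioc_subset_Icc_self
    · set C : ℝ := f r₁ * Real.exp (c * r₁) with hCdef
      have hCpos : 0 < C := mul_pos (hpos r₁ hr₁pos.le) (Real.exp_pos _)
      refine MeasureTheory.Integrable.mono'
        (g := fun x => C * Real.exp (-(c-1) * x))
        (((exp_neg_integrableOn_Ioi r₁ (by linarith : (0:ℝ) < c - 1))).const_mul C) ?_ ?_
      · exact (hcont0.mono (fun x hx => le_trans hr₁pos.le (le_of_lt hx))).aestronglyMeasurable
          measurableSet_Ioi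
      · rw [ae_restrict_iff' measurableSet_Ioi]
        refine Filter.Eventually.of_forall (fun x hx => ?_)
        have hx0 : 0 < x := lt_trans hr₁pos hx
        have hfx : 0 < f x := hpos x hx0.le
        rw [Real.norm_eq_abs, abs_of_pos (mul_pos (Real.exp_pos x) hfx)]
        have h1 : f x ≤ C * Real.exp (-c * x) := hdecay x (le_of_lt hx)
        calc Real.exp x * f x ≤ Real.exp x * (C * Real.exp (-c * x)) := by
              exact mul_le_mul_of_nonneg_left h1 (Real.exp_pos x).le
          _ = C * Real.exp (-(c-1) * x) := by
              rw [show -(c-1) * x = x + -c * x by ring, Real.exp_add]; ring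
  -- limit of exp r * |fd r|^(p-1)
  have hlim : Tendsto (fun r => Real.exp r * |fd r| ^ (p-1)) atTop
      (𝓝 (∫ σ in Set.Ioi (0:ℝ), Real.exp σ * f σ)) := by
    have h1 := intervalIntegral_tendsto_integral_Ioi 0 hint tendsto_id
    refine h1.congr' ?_
    filter_upwards [eventually_ge_atTop (0:ℝ)] with r hr
    exact (hid r hr).symm
  -- positivity of the integral
  have hIpos : 0 < ∫ σ in Set.Ioi (0:ℝ), Real.exp σ * f σ := by
    have hf1 : 0 < f 1 := hpos 1 one_pos.le
    have h2 : f 1 ≤ ∫ σ in (0:ℝ)..1, Real.exp σ * f σ := by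
      have hmono : ∫ σ in (0:ℝ)..1, (f 1 : ℝ) ≤ ∫ σ in (0:ℝ)..1, Real.exp σ * f σ := by
        refine intervalIntegral.integral_mono_on one_pos.le
          (intervalIntegrable_const) ?_ ?_
        · apply ContinuousOn.intervalIntegrable
          rw [Set.uIcc_of_le one_pos.le]
          exact hcont0.mono (fun x hx => hx.1)
        · intro x hx
          have he : 1 ≤ Real.exp x := Real.one_le_exp hx.1
          have hfx : f 1 ≤ f x := hanti (Set.mem_Ici.mpr hx.1) (Set.mem_Ici.mpr one_pos.le) hx.2
          nlinarith [hpos x hx.1]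
      simpa using hmono
    have h3 : (∫ σ in (0:ℝ)..1, Real.exp σ * f σ) ≤ ∫ σ in Set.Ioi (0:ℝ), Real.exp σ * f σ := by
      rw [intervalIntegral.integral_of_le one_pos.le]
      refine MeasureTheory.setIntegral_mono_set hint ?_ ?_
      · rw [Filter.EventuallyLE, ae_restrict_iff' measurableSet_Ioi]
        refine Filter.Eventually.of_forall (fun x hx => ?_)
        exact mul_nonneg (Real.exp_pos x).le (hpos x (le_of_lt hx)).le
      · exact HasSubset.Subset.eventuallyLE (fun x hx => hx.1)
    linarith
  have hIrp : 0 < (∫ σ in Set.Ioi (0:ℝ), Real.exp σ * f σ) ^ (1/(p-1)) :=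
    Real.rpow_pos_of_pos hIpos _
  refine ⟨hTop, hint, hlim, mul_pos hp1 hIrp, ?_⟩
  -- final asymptotics
  have h1 : Tendsto (fun r => (Real.exp r * |fd r| ^ (p-1)) ^ (1/(p-1))) atTop
      (𝓝 ((∫ σ in Set.Ioi (0:ℝ), Real.exp σ * f σ) ^ (1/(p-1)))) :=
    (Real.continuousAt_rpow_const _ (1/(p-1)) (Or.inl (ne_of_gt hIpos))).tendsto.comp hlim
  have h2 : Tendsto (fun r => f r / ((p-1) * |fd r|)) atTop (𝓝 1) := by
    have ha1 : Tendsto (fun r => (p-1) * (|fd r| / f r)) atTop (𝓝 ((p-1) * (1/(p-1)))) :=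
      hrt.const_mul (p-1)
    have he : (p-1) * (1/(p-1)) = 1 := by field_simp
    rw [he] at ha1
    have hinv := ha1.inv₀ (by norm_num : (1:ℝ) ≠ 0)
    rw [inv_one] at hinv
    refine hinv.congr' ?_
    filter_upwards [eventually_gt_atTop (0:ℝ)] with r hr
    have hfr : 0 < f r := hpos r hr.le
    have habs : 0 < |fd r| := abs_pos.mpr (ne_of_lt (hfdneg r hr))
    field_simp
  have h3 : Tendsto (fun r => (f r / ((p-1) * |fd r|)) *
      ((p-1) * (Real.exp r * |fd r| ^ (p-1)) ^ (1/(p-1)))) atTop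
      (𝓝 (1 * ((p-1) * (∫ σ in Set.Ioi (0:ℝ), Real.exp σ * f σ) ^ (1/(p-1))))) :=
    h2.mul (h1.const_mul (p-1))
  rw [one_mul] at h3
  refine h3.congr' ?_
  filter_upwards [eventually_gt_atTop (0:ℝ)] with r hr
  have hfr : 0 < f r := hpos r hr.le
  have habs : 0 < |fd r| := abs_pos.mpr (ne_of_lt (hfdneg r hr))
  have hA : (Real.exp r * |fd r| ^ (p-1)) ^ (1/(p-1)) = Real.exp (r/(p-1)) * |fd r| := by
    rw [Real.mul_rpow (Real.exp_pos r).le (Real.rpow_nonneg (abs_nonneg _) _),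
      ← Real.rpow_mul (abs_nonneg _), mul_one_div, div_self (ne_of_gt hp1), Real.rpow_one]
    congr 1
    rw [Real.rpow_def_of_pos (Real.exp_pos r), Real.log_exp, mul_one_div]
  rw [hA]
  field_simp
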